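/- Let B₃ be the group with presentation ⟨x, y ∥ x y x = y x y⟩ (the braid group on 3 strands, i.e. the presented group on two generators with the single relator x y x (y x y)⁻¹). Then the commutator subgroup of B₃ is isomorphic to the free group of rank 2. -/

import Mathlib

/-- The single braid relator `x y x (y x y)⁻¹` in the free group on two generators. -/
def braidRel3 : FreeGroup (Fin 2) :=
  FreeGroup.of 0 * FreeGroup.of 1 * FreeGroup.of 0 *
    (FreeGroup.of 1 * FreeGroup.of 0 * FreeGroup.of 1)⁻¹

/-- The braid group on 3 strands `B₃ = ⟨x, y ∥ x y x = y x y⟩`. -/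
def BraidGroup3 : Type := PresentedGroup ({braidRel3} : Set (FreeGroup (Fin 2)))

instance : Group BraidGroup3 := by unfold BraidGroup3; infer_instance

namespace BraidAux

abbrev F2 : Type := FreeGroup (Fin 2)

noncomputable def aGen : F2 := FreeGroup.of 0
noncomputable def bGen : F2 := FreeGroup.of 1

lemma of0 : FreeGroup.of (0 : Fin 2) = aGen := rfl
lemma of1 : FreeGroup.of (1 : Fin 2) = bGen := rfl

/-- forward map of the automorphism: a ↦ b, b ↦ a⁻¹ b -/
noncomputable def Afwd : F2 →* F2 :=
  FreeGroup.lift (fun i => if i = 0 then bGen else aGen⁻¹ * bGen)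

/-- backward map: a ↦ a b⁻¹, b ↦ a -/
noncomputable def Abwd : F2 →* F2 :=
  FreeGroup.lift (fun i => if i = 0 then aGen * bGen⁻¹ else aGen)

@[simp] lemma Afwd_a : Afwd aGen = bGen := by simp [Afwd, aGen]
@[simp] lemma Afwd_b : Afwd bGen = aGen⁻¹ * bGen := by simp [Afwd, bGen]
@[simp] lemma Abwd_a : Abwd aGen = aGen * bGen⁻¹ := by simp [Abwd, aGen]
@[simp] lemma Abwd_b : Abwd bGen = aGen := by simp [Abwd, bGen]

lemma fin2_cases (i : Fin 2) : i = 0 ∨ i = 1 := by omega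

/-- the automorphism A of F₂ -/
noncomputable def A : F2 ≃* F2 :=
  MonoidHom.toMulEquiv Afwd Abwd
    (by
      apply FreeGroup.ext_hom
      intro i
      rcases fin2_cases i with h | h <;> subst h <;>
        simp [of0, of1])
    (by
      apply FreeGroup.ext_hom
      intro i
      rcases fin2_cases i with h | h <;> subst h <;>
        simp [of0, of1])

@[simp] lemma A_a : A aGen = bGen := Afwd_a
@[simp] lemma A_b : A bGen = aGen⁻¹ * bGen := Afwd_b
@[simp] lemma Asymm_a : A.symm aGen = aGen * bGen⁻¹ := Abwd_a
@[simp] lemma Asymm_b : A.symm bGen = aGen := Abwd_b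

/-- the action of ℤ on F₂ -/
noncomputable def act : Multiplicative ℤ →* MulAut F2 :=
  zpowersHom (MulAut F2) (A : MulAut F2)

noncomputable def t : Multiplicative ℤ := Multiplicative.ofAdd 1

@[simp] lemma act_t (n : F2) : act t n = A n := by
  simp [act, t]

/-- the semidirect product F₂ ⋊ ℤ -/
noncomputable abbrev SP : Type := SemidirectProduct F2 (Multiplicative ℤ) act

open SemidirectProduct
open scoped commutatorElement

lemma inr_mul_inl (g : Multiplicative ℤ) (n : F2) :
    (inr g * inl n : SP) = inl (act g n) * inr g := by
  rw [inl_aut, mul_assoc, mul_assoc, ← map_mul, inv_mul_cancel, map_one, mul_one]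

noncomputable def XS : SP := inr t
noncomputable def YS : SP := inl aGen * inr t

lemma nf (n m : F2) (g h : Multiplicative ℤ) :
    (inl n * inr g : SP) * (inl m * inr h) = inl (n * act g m) * inr (g * h) := by
  calc (inl n * inr g : SP) * (inl m * inr h)
      = inl n * (inr g * inl m) * inr h := by group
    _ = inl n * (inl (act g m) * inr g) * inr h := by rw [inr_mul_inl]
    _ = (inl n * inl (act g m)) * (inr g * inr h) := by group
    _ = inl (n * act g m) * inr (g * h) := by rw [← map_mul, ← map_mul]

lemma braid_rel_SP : XS * YS * XS = YS * XS * YS := by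
  have hXS : XS = inl (1 : F2) * inr t := by rw [map_one, one_mul]; rfl
  have h3 : act (t * t) aGen = aGen⁻¹ * bGen := by
    rw [map_mul]
    show A (A aGen) = aGen⁻¹ * bGen
    rw [A_a, A_b]
  rw [hXS]
  unfold YS
  rw [nf, nf, nf, nf]
  have hL : (1 : F2) * act t aGen * act (t * t) (1 : F2) = bGen := by
    rw [map_one, act_t, A_a, one_mul, mul_one]
  have hR : aGen * act t (1 : F2) * act (t * t) aGen = bGen := by
    rw [map_one, h3, mul_one]
    group
  rw [hL, hR]

/-- the hom B₃ → F₂ ⋊ ℤ -/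
noncomputable def Φ : BraidGroup3 →* SP :=
  PresentedGroup.toGroup (f := fun i => if i = 0 then XS else YS)
    (by
      intro r hr
      rcases hr with rfl
      simp only [braidRel3, map_mul, map_inv, FreeGroup.lift_apply_of]
      norm_num
      rw [braid_rel_SP]
      group)

noncomputable def X : BraidGroup3 := PresentedGroup.of (rels := {braidRel3}) 0
noncomputable def Y : BraidGroup3 := PresentedGroup.of (rels := {braidRel3}) 1

@[simp] lemma Φ_X : Φ X = XS := PresentedGroup.toGroup.of _
@[simp] lemma Φ_Y : Φ Y = YS := PresentedGroup.toGroup.of _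

lemma braid_rel_B : X * Y * X = Y * X * Y := by
  have h : (PresentedGroup.mk {braidRel3} braidRel3 : BraidGroup3) = 1 := by
    apply (QuotientGroup.eq_one_iff _).2
    exact Subgroup.subset_normalClosure (by simp)
  have h : X * Y * X * (Y * X * Y)⁻¹ = 1 := h
  rw [mul_inv_eq_one] at h
  exact h

/-- the hom F₂ → B₃ : a ↦ Y X⁻¹, b ↦ X Y X⁻¹ X⁻¹ -/
noncomputable def ψ₁ : F2 →* BraidGroup3 :=
  FreeGroup.lift (fun i => if i = 0 then Y * X⁻¹ else X * Y * X⁻¹ * X⁻¹)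

@[simp] lemma ψ₁_a : ψ₁ aGen = Y * X⁻¹ := by simp [ψ₁, aGen]
@[simp] lemma ψ₁_b : ψ₁ bGen = X * Y * X⁻¹ * X⁻¹ := by simp [ψ₁, bGen]

noncomputable def ψ₂ : Multiplicative ℤ →* BraidGroup3 := zpowersHom _ X

@[simp] lemma ψ₂_t : ψ₂ t = X := by simp [ψ₂, t]

lemma key1 (n : F2) : ψ₁ (A n) = X * ψ₁ n * X⁻¹ := by
  induction n using FreeGroup.induction_on with
  | C1 => simp
  | of i =>
      rcases fin2_cases i with h | h <;> subst h
      · show ψ₁ (A aGen) = X * ψ₁ aGen * X⁻¹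
        rw [A_a, ψ₁_a, ψ₁_b]
        group
      · show ψ₁ (A bGen) = X * ψ₁ bGen * X⁻¹
        rw [A_b, map_mul, map_inv, ψ₁_a, ψ₁_b]
        -- (Y X⁻¹)⁻¹ (X Y X⁻¹ X⁻¹) = X (X Y X⁻¹ X⁻¹) X⁻¹
        have hb := braid_rel_B
        have hkey : Y⁻¹ * (X * Y) = X * Y * X⁻¹ := by
          apply mul_left_cancel (a := Y)
          calc Y * (Y⁻¹ * (X * Y)) = X * Y * X * X⁻¹ := by group
            _ = Y * X * Y * X⁻¹ := by rw [hb]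
            _ = Y * (X * Y * X⁻¹) := by group
        calc (Y * X⁻¹)⁻¹ * (X * Y * X⁻¹ * X⁻¹)
            = X * (Y⁻¹ * (X * Y)) * X⁻¹ * X⁻¹ := by group
          _ = X * (X * Y * X⁻¹) * X⁻¹ * X⁻¹ := by rw [hkey]
          _ = X * (X * Y * X⁻¹ * X⁻¹) * X⁻¹ := by group
  | inv_of i ih =>
      rw [map_inv, map_inv, map_inv, ih]
      group
  | mul x y ihx ihy =>
      rw [map_mul, map_mul, map_mul, ihx, ihy]
      group

lemma key1' (n : F2) : ψ₁ (A.symm n) = X⁻¹ * ψ₁ n * X := by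
  have := key1 (A.symm n)
  rw [MulEquiv.apply_symm_apply] at this
  rw [this]; group

lemma keyk : ∀ (k : ℤ) (n : F2), ψ₁ (((A : MulAut F2) ^ k) n) = X ^ k * ψ₁ n * (X ^ k)⁻¹ := by
  intro k
  induction k using Int.induction_on with
  | zero => intro n; simp
  | succ k ih =>
      intro n
      have h : ((A : MulAut F2) ^ ((k : ℤ) + 1)) n = ((A : MulAut F2) ^ (k:ℤ)) (A n) := by
        rw [zpow_add, zpow_one]
        rfl
      rw [h, ih, key1, zpow_add, zpow_one]
      group
  | pred k ih =>
      intro n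
      have h : ((A : MulAut F2) ^ (-(k : ℤ) - 1)) n = ((A : MulAut F2) ^ (-(k:ℤ))) (A.symm n) := by
        rw [sub_eq_add_neg, zpow_add, zpow_neg_one]
        rfl
      rw [h, ih, key1', sub_eq_add_neg, zpow_add, zpow_neg_one]
      group

lemma compat : ∀ g : Multiplicative ℤ,
    ψ₁.comp (act g).toMonoidHom = (MulAut.conj (ψ₂ g)).toMonoidHom.comp ψ₁ := by
  intro g
  refine MonoidHom.ext fun n => ?_
  simp only [MonoidHom.comp_apply, MulEquiv.coe_toMonoidHom, MulAut.conj_apply]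
  have h1 : act g n = ((A : MulAut F2) ^ g.toAdd) n := by simp [act]
  have h2 : ψ₂ g = X ^ g.toAdd := by simp [ψ₂]
  rw [h1, h2, keyk]

/-- the hom F₂ ⋊ ℤ → B₃ -/
noncomputable def Ψ : SP →* BraidGroup3 := SemidirectProduct.lift ψ₁ ψ₂ compat

@[simp] lemma Ψ_XS : Ψ XS = X := by simp [Ψ, XS]
@[simp] lemma Ψ_YS : Ψ YS = Y := by simp [Ψ, YS]

lemma ΨΦ : Ψ.comp Φ = MonoidHom.id _ := by
  apply PresentedGroup.ext
  intro i
  rcases fin2_cases i with h | h <;> subst h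
  · show Ψ (Φ X) = X
    simp
  · show Ψ (Φ Y) = Y
    simp

lemma ΦΨ : Φ.comp Ψ = MonoidHom.id _ := by
  apply SemidirectProduct.hom_ext
  · apply FreeGroup.ext_hom
    intro i
    simp only [MonoidHom.comp_apply, MonoidHom.id_apply]
    rcases fin2_cases i with h | h <;> subst h
    · show Φ (Ψ (inl aGen)) = inl aGen
      have h : Ψ (inl aGen) = Y * X⁻¹ := by simp [Ψ]
      rw [h, map_mul, map_inv, Φ_X, Φ_Y]
      unfold XS YS
      group
    · show Φ (Ψ (inl bGen)) = inl bGen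
      have h : Ψ (inl bGen) = X * Y * X⁻¹ * X⁻¹ := by simp [Ψ]
      rw [h]
      simp only [map_mul, map_inv, Φ_X, Φ_Y]
      unfold XS YS
      rw [show (inr t * (inl aGen * inr t) : SP) = (inr t * inl aGen) * inr t from
        (mul_assoc _ _ _).symm, inr_mul_inl]
      simp only [act_t, A_a]
      group
  · refine MonoidHom.ext_mint ?_
    show Φ (Ψ (inr t)) = inr t
    have h : Ψ (inr t) = X := by simp [Ψ]
    rw [h, Φ_X]; rfl

/-- the isomorphism B₃ ≃ F₂ ⋊ ℤ -/
noncomputable def Θ : BraidGroup3 ≃* SP := MonoidHom.toMulEquiv Φ Ψ ΨΦ ΦΨ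

lemma comm_inl (n : F2) : ⁅(inr t : SP), (inl n : SP)⁆ = inl (A n * n⁻¹) := by
  rw [commutatorElement_def, ← map_inv inr t, ← inl_aut, ← map_inv inl n, ← map_mul, act_t]

lemma commutator_SP : commutator SP = (inl : F2 →* SP).range := by
  apply le_antisymm
  · rw [SemidirectProduct.range_inl_eq_ker_rightHom]
    exact Abelianization.commutator_subset_ker _
  · have haInv : (inl aGen⁻¹ : SP) ∈ commutator SP := by
      have h : ⁅(inr t : SP), (inl bGen : SP)⁆ = inl aGen⁻¹ := by
        rw [comm_inl, A_b]
        congr 1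
        group
      rw [← h, commutator_def]
      exact Subgroup.commutator_mem_commutator (Subgroup.mem_top (inr t)) (Subgroup.mem_top _)
    have ha : (inl aGen : SP) ∈ commutator SP := by
      have := (commutator SP).inv_mem haInv
      rwa [← map_inv, inv_inv] at this
    have hb : (inl bGen : SP) ∈ commutator SP := by
      have h : ⁅(inr t : SP), (inl aGen : SP)⁆ = inl (bGen * aGen⁻¹) := by
        rw [comm_inl, A_a]
      have hba : (inl (bGen * aGen⁻¹) : SP) ∈ commutator SP := by
        rw [← h, commutator_def]
        exact Subgroup.commutator_mem_commutator (Subgroup.mem_top (inr t))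
          (Subgroup.mem_top (inl aGen))
      have := (commutator SP).mul_mem hba ha
      rwa [← map_mul, inv_mul_cancel_right] at this
    rintro x ⟨n, rfl⟩
    induction n using FreeGroup.induction_on with
    | C1 => simpa using (commutator SP).one_mem
    | of i =>
        rcases fin2_cases i with h | h <;> subst h
        · exact ha
        · exact hb
    | inv_of i ih =>
        rw [map_inv]
        exact (commutator SP).inv_mem ih
    | mul x y ihx ihy =>
        rw [map_mul]
        exact (commutator SP).mul_mem ihx ihy

end BraidAux

/-- The commutator subgroup of the braid group `B₃ = ⟨x, y ∥ x y x = y x y⟩`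
is isomorphic to the free group of rank `2`. -/
theorem stmt_3 :
    Nonempty ((commutator BraidGroup3) ≃* FreeGroup (Fin 2)) := by
  classical
  open BraidAux SemidirectProduct in
  have hmap : (commutator BraidGroup3).map Θ.toMonoidHom
      = (inl : F2 →* SP).range := by
    have hsurj : Function.Surjective Θ.toMonoidHom := Θ.surjective
    rw [commutator_def, Subgroup.map_commutator,
      Subgroup.map_top_of_surjective _ hsurj, ← commutator_def, commutator_SP]
  exact ⟨((Θ.subgroupMap (commutator BraidGroup3)).trans
      (MulEquiv.subgroupCongr hmap)).trans
      (MonoidHom.ofInjective SemidirectProduct.inl_injective).symm⟩
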